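/- Let Kx† = y† and ‖y^δ − y†‖ ≤ δ, and assume the source condition: there exist w ∈ H and ξ ∈ ∂‖·‖_{ℓ¹}(x†) (i.e., ξ_i = sign(x†_i) when x†_i ≠ 0 and ξ_i ∈ [−1,1] otherwise) such that K*w = x† + ηξ for some η > 0. Then the minimizer x_{α,β}^δ of Φ_{α,β} with α = ηβ satisfies ‖Kx_{α,β}^δ − y^δ‖ ≤ δ + 2β‖w‖ and ‖x_{α,β}^δ − x†‖_{ℓ²} ≤ δ/√β + √β‖w‖. -/

import Mathlib

noncomputable section

open Filter Topology

/-- `ℓ²(ℕ, ℝ)`. -/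
abbrev ltwo : Type := lp (fun _ : ℕ => ℝ) 2

/-- `x ∈ ℓ¹`. -/
def inL1 (x : ltwo) : Prop := Memℓp (fun i => x i) 1

/-- The `ℓ¹`-norm `‖x‖_{ℓ¹} = ∑ |xᵢ|` (junk value if `x ∉ ℓ¹`). -/
noncomputable def l1norm (x : ltwo) : ℝ := ∑' i, |x i|

/-- The elastic-net functional `Φ_{α,β}(x) = ½‖Kx − y‖² + α‖x‖₁ + (β/2)‖x‖₂²`,
real-valued on its effective domain `ℓ¹ ∩ ℓ²` (the convention `Φ = +∞` off `ℓ¹` is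
implemented by restricting all statements to `inL1`). -/
noncomputable def Phi {H : Type*} [NormedAddCommGroup H] [InnerProductSpace ℝ H]
    (K : ltwo →L[ℝ] H) (y : H) (α β : ℝ) (x : ltwo) : ℝ :=
  (1 / 2) * ‖K x - y‖ ^ 2 + α * l1norm x + (β / 2) * ‖x‖ ^ 2

/-- `x` is a minimizer of `Φ_{α,β}` over `ℓ²` (with the `+∞` convention off `ℓ¹`). -/
def IsMinimizer {H : Type*} [NormedAddCommGroup H] [InnerProductSpace ℝ H]
    (K : ltwo →L[ℝ] H) (y : H) (α β : ℝ) (x : ltwo) : Prop :=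
  inL1 x ∧ ∀ z : ltwo, inL1 z → Phi K y α β x ≤ Phi K y α β z

lemma abs_le_sign_mul (t : ℝ) : |t| ≤ Real.sign t * t := by
  rcases lt_trichotomy t 0 with h | h | h
  · rw [Real.sign_of_neg h, abs_of_neg h]; linarith
  · simp [h]
  · rw [Real.sign_of_pos h, abs_of_pos h, one_mul]

set_option maxHeartbeats 1000000 in
/-- A priori convergence rate under the source condition
`K*w = x† + ηξ`, `ξ ∈ ∂‖·‖₁(x†)`: for `α = ηβ` the elastic-net minimizer satisfies
`‖Kx_{α,β}^δ − y^δ‖ ≤ δ + 2β‖w‖` and `‖x_{α,β}^δ − x†‖₂ ≤ δ/√β + √β‖w‖`. -/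
theorem elasticNet_convergence_rate_a_priori
    {H : Type*} [NormedAddCommGroup H] [InnerProductSpace ℝ H] [CompleteSpace H]
    (K : ltwo →L[ℝ] H) (ydag ydelta : H) (δ : ℝ)
    (xdag : ltwo) (hxdag1 : inL1 xdag) (hKxdag : K xdag = ydag)
    (hnoise : ‖ydelta - ydag‖ ≤ δ)
    (η : ℝ) (hη : 0 < η) (w : H) (ξ : ℕ → ℝ)
    (hξ1 : ∀ i, xdag i ≠ 0 → ξ i = Real.sign (xdag i))
    (hξ2 : ∀ i, |ξ i| ≤ 1)
    (hsource : ∀ i, (ContinuousLinearMap.adjoint K w) i = xdag i + η * ξ i)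
    (β : ℝ) (hβ : 0 < β)
    (x : ltwo) (hx : IsMinimizer K ydelta (η * β) β x) :
    ‖K x - ydelta‖ ≤ δ + 2 * β * ‖w‖ ∧
      ‖x - xdag‖ ≤ δ / Real.sqrt β + Real.sqrt β * ‖w‖ := by
  have hδ0 : 0 ≤ δ := le_trans (norm_nonneg _) hnoise
  have hc0 : (0:ℝ) ≤ ‖w‖ := norm_nonneg _
  set a := ‖K x - ydelta‖ with ha_def
  set d := ‖x - xdag‖ with hd_def
  set c := ‖w‖ with hc_def
  have ha0 : 0 ≤ a := norm_nonneg _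
  have hd0 : 0 ≤ d := norm_nonneg _
  -- summability facts
  have hsx : Summable fun i => |x i| := by
    have := hx.1.summable (p := 1) (by norm_num)
    simpa using this
  have hsxd : Summable fun i => |xdag i| := by
    have := hxdag1.summable (p := 1) (by norm_num)
    simpa using this
  have hsS : Summable fun i => ξ i * (x i - xdag i) := by
    apply Summable.of_norm_bounded (g := fun i => |x i| + |xdag i|) (hsx.add hsxd)
    intro i
    rw [Real.norm_eq_abs, abs_mul]
    calc |ξ i| * |x i - xdag i| ≤ 1 * |x i - xdag i| :=
          mul_le_mul_of_nonneg_right (hξ2 i) (abs_nonneg _)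
      _ = |x i - xdag i| := one_mul _
      _ ≤ |x i| + |xdag i| := abs_sub _ _
  set S := ∑' i, ξ i * (x i - xdag i) with hS_def
  set P := (inner ℝ xdag (x - xdag) : ℝ) with hP_def
  -- subgradient inequality
  have hsub : l1norm xdag + S ≤ l1norm x := by
    rw [l1norm, l1norm, hS_def, ← Summable.tsum_add hsxd hsS]
    refine Summable.tsum_le_tsum (fun i => ?_) (hsxd.add hsS) hsx
    have h1 : ξ i * x i ≤ |x i| := by
      calc ξ i * x i ≤ |ξ i * x i| := le_abs_self _
        _ = |ξ i| * |x i| := abs_mul _ _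
        _ ≤ 1 * |x i| := mul_le_mul_of_nonneg_right (hξ2 i) (abs_nonneg _)
        _ = |x i| := one_mul _
    have h2 : |xdag i| ≤ ξ i * xdag i := by
      by_cases h : xdag i = 0
      · simp [h]
      · rw [hξ1 i h]; exact abs_le_sign_mul _
    nlinarith [h1, h2]
  -- norm expansion
  have hexp : ‖x‖ ^ 2 = ‖xdag‖ ^ 2 + 2 * P + d ^ 2 := by
    have := norm_add_sq_real xdag (x - xdag)
    rw [add_sub_cancel] at this
    rw [this, hP_def, hd_def]
  -- source condition combination
  have hsxu : Summable fun i => xdag i * (x i - xdag i) := by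
    have := lp.summable_inner (𝕜 := ℝ) xdag (x - xdag)
    simpa [RCLike.inner_apply, lp.coeFn_sub, Pi.sub_apply, mul_comm] using this
  have hKw : (inner ℝ (ContinuousLinearMap.adjoint K w) (x - xdag) : ℝ) = η * S + P := by
    rw [hP_def, lp.inner_eq_tsum, lp.inner_eq_tsum]
    simp only [RCLike.inner_apply', conj_trivial, lp.coeFn_sub, Pi.sub_apply]
    calc (∑' i, (ContinuousLinearMap.adjoint K w) i * (x i - xdag i))
        = ∑' i, (η * (ξ i * (x i - xdag i)) + xdag i * (x i - xdag i)) :=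
          tsum_congr fun i => by rw [hsource i]; ring
      _ = η * S + ∑' i, xdag i * (x i - xdag i) := by
          rw [Summable.tsum_add (hsS.mul_left η) hsxu, tsum_mul_left]
  have hadj : (inner ℝ (ContinuousLinearMap.adjoint K w) (x - xdag) : ℝ)
      = inner ℝ w (K (x - xdag)) := ContinuousLinearMap.adjoint_inner_left K (x - xdag) w
  -- Cauchy–Schwarz bound
  have hCS : -(c * a) - c * δ ≤ η * S + P := by
    rw [← hKw, hadj]
    have hdecomp : K (x - xdag) = (K x - ydelta) + (ydelta - ydag) := by
      rw [map_sub, hKxdag]; abel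
    rw [hdecomp, inner_add_right]
    have h1 : -(c * a) ≤ (inner ℝ w (K x - ydelta) : ℝ) := by
      have := abs_real_inner_le_norm w (K x - ydelta)
      have h := neg_abs_le (inner ℝ w (K x - ydelta) : ℝ)
      nlinarith [this, h]
    have h2 : -(c * δ) ≤ (inner ℝ w (ydelta - ydag) : ℝ) := by
      have h3 := abs_real_inner_le_norm w (ydelta - ydag)
      have h4 := neg_abs_le (inner ℝ w (ydelta - ydag) : ℝ)
      nlinarith [mul_le_mul_of_nonneg_left hnoise hc0]
    linarith
  -- minimality
  have hmin := hx.2 xdag hxdag1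
  rw [Phi, Phi, ← ha_def, hKxdag] at hmin
  have hT : ‖ydag - ydelta‖ ^ 2 ≤ δ ^ 2 := by
    rw [norm_sub_rev]
    exact pow_le_pow_left₀ (norm_nonneg _) hnoise 2
  -- key inequality
  have key : (1/2) * a ^ 2 + (β/2) * d ^ 2 ≤ (1/2) * δ ^ 2 + β * c * a + β * c * δ := by
    have h1 : η * β * (l1norm xdag + S) ≤ η * β * l1norm x :=
      mul_le_mul_of_nonneg_left hsub (mul_pos hη hβ).le
    have h2 : β * (-(c * a) - c * δ) ≤ β * (η * S + P) :=
      mul_le_mul_of_nonneg_left hCS hβ.le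
    have h3 : (β/2) * ‖x‖ ^ 2 = (β/2) * ‖xdag‖ ^ 2 + β * P + (β/2) * d ^ 2 := by
      rw [hexp]; ring
    linarith [hmin, h1, h2, h3, hT]
  constructor
  · -- first bound
    nlinarith [key, mul_nonneg hβ.le (sq_nonneg d), mul_nonneg (mul_nonneg hβ.le hc0) hδ0,
      mul_nonneg hδ0 hδ0, ha0, hδ0, mul_nonneg hβ.le hc0]
  · -- second bound
    have hs : 0 < Real.sqrt β := Real.sqrt_pos.2 hβ
    have h4 : (Real.sqrt β * d) ^ 2 ≤ (δ + β * c) ^ 2 := by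
      rw [mul_pow, Real.sq_sqrt hβ.le]
      nlinarith [key, sq_nonneg (a - β * c)]
    have h5 : Real.sqrt β * d ≤ δ + β * c := by
      nlinarith [h4, mul_nonneg hs.le hd0, hδ0, mul_nonneg hβ.le hc0]
    have heq : Real.sqrt β * (δ / Real.sqrt β + Real.sqrt β * c) = δ + β * c := by
      rw [mul_add, mul_div_cancel₀ δ hs.ne', ← mul_assoc, Real.mul_self_sqrt hβ.le]
    exact le_of_mul_le_mul_left (by rw [heq]; exact h5) hs
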